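/- Let 𝒜 = (ρ_i)_{i∈A} be a totally ordered family of valuations on K[x] and suppose f ∈ K[x] is not 𝒜-stable. Then ρ_i(f) < ρ_j(f) for all i < j in A. -/

import Mathlib

open Polynomial Finset

variable {K : Type*} [Field K] {Λ : Type*} [AddCommGroup Λ] [LinearOrder Λ] [IsOrderedAddMonoid Λ]

/-- `v` is a valuation on the field `K` with values in `Λ∞ = WithTop Λ`. -/
def IsVal (v : K → WithTop Λ) : Prop :=
  (∀ a, v a = ⊤ ↔ a = 0) ∧ v 1 = 0 ∧ (∀ a b, v (a * b) = v a + v b) ∧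
    (∀ a b, min (v a) (v b) ≤ v (a + b))

/-- `μ` is a valuation on `K[x]` extending `v`. -/
def ExtVal (v : K → WithTop Λ) (μ : Polynomial K → WithTop Λ) : Prop :=
  (∀ f g, μ (f * g) = μ f + μ g) ∧ (∀ f g, min (μ f) (μ g) ≤ μ (f + g)) ∧
    (∀ a, μ (Polynomial.C a) = v a)

/-- `h` divides `g` μ-equivalently (`h ∣_μ g`): there is `q` with `μ(g - q h) > μ(g)`. -/
def MuDvd (μ : Polynomial K → WithTop Λ) (h g : Polynomial K) : Prop :=
  ∃ q : Polynomial K, μ g < μ (g - q * h)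

/-- `φ` is μ-minimal: `φ ∤_μ f` for every nonzero `f` of degree less than `deg φ`. -/
def MuMinimal (μ : Polynomial K → WithTop Λ) (φ : Polynomial K) : Prop :=
  ∀ f : Polynomial K, f ≠ 0 → f.degree < φ.degree → ¬ MuDvd μ φ f

/-- `φ` is μ-irreducible: the principal ideal generated by `in_μ φ` in the graded
algebra is a nonzero prime ideal (stated via μ-divisibility). -/
def MuIrreducible (μ : Polynomial K → WithTop Λ) (φ : Polynomial K) : Prop :=
  μ φ ≠ ⊤ ∧ ¬ MuDvd μ φ 1 ∧
    ∀ f g : Polynomial K, MuDvd μ φ (f * g) → MuDvd μ φ f ∨ MuDvd μ φ g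

/-- A (MacLane–Vaquié) key polynomial for `μ`. -/
def KeyPoly (μ : Polynomial K → WithTop Λ) (φ : Polynomial K) : Prop :=
  φ.Monic ∧ MuMinimal μ φ ∧ MuIrreducible μ φ

/-- `μ'` is the augmented valuation `[μ; φ, γ]`: on φ-expansions
`f = Σ a_s φ^s` (with `deg a_s < deg φ`), `μ' f = min_s (μ(a_s) + s·γ)`. -/
def AugVal (μ : Polynomial K → WithTop Λ) (φ : Polynomial K) (γ : WithTop Λ)
    (μ' : Polynomial K → WithTop Λ) : Prop :=
  ∀ (f : Polynomial K) (n : ℕ) (a : ℕ → Polynomial K),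
    (∀ s, (a s).degree < φ.degree) →
    f = ∑ s ∈ Finset.range n, a s * φ ^ s →
    μ' f = (Finset.range n).inf fun s => μ (a s) + s • γ

/-- `f` is 𝒜-stable for the family `ρ`: its values are eventually constant. -/
def AStable {A : Type*} [LinearOrder A] (ρ : A → Polynomial K → WithTop Λ)
    (f : Polynomial K) : Prop :=
  ∃ i₀ : A, ∀ i, i₀ ≤ i → ρ i f = ρ i₀ f

section Aux

variable {v : K → WithTop Λ} {μ μ' ν τ : Polynomial K → WithTop Λ}

lemma IsVal.v_zero (hv : IsVal v) : v 0 = ⊤ := (hv.1 0).2 rfl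

lemma IsVal.v_ne_top (hv : IsVal v) {c : K} (hc : c ≠ 0) : v c ≠ ⊤ :=
  fun h => hc ((hv.1 c).1 h)

lemma ExtVal.zero' (hv : IsVal v) (hμ : ExtVal v μ) : μ 0 = ⊤ := by
  have h := hμ.2.2 0
  rwa [map_zero, hv.v_zero] at h

lemma ExtVal.one' (hv : IsVal v) (hμ : ExtVal v μ) : μ 1 = 0 := by
  have h := hμ.2.2 1
  rwa [map_one, hv.2.1] at h

lemma IsVal.v_neg_one (hv : IsVal v) : v (-1 : K) = 0 := by
  have h := hv.2.2.1 (-1) (-1)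
  rw [neg_one_mul, neg_neg, hv.2.1] at h
  rcases eq_or_ne (v (-1 : K)) ⊤ with ht | ht
  · rw [ht, top_add] at h
    exact absurd h.symm (by simp)
  · lift v (-1 : K) to Λ using ht with x hx
    have hx : x + x = 0 := by exact_mod_cast h.symm
    have hx0 : x = 0 := by
      rcases lt_trichotomy x 0 with h1 | h1 | h1
      · have h2 : x + x < 0 + 0 := add_lt_add h1 h1
        rw [add_zero, hx] at h2
        exact absurd h2 (lt_irrefl 0)
      · exact h1
      · have h2 : (0 : Λ) + 0 < x + x := add_lt_add h1 h1
        rw [add_zero, hx] at h2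
        exact absurd h2 (lt_irrefl 0)
    rw [hx0]
    exact WithTop.coe_zero

lemma ExtVal.neg' (hv : IsVal v) (hμ : ExtVal v μ) (g : Polynomial K) : μ (-g) = μ g := by
  have h := hμ.1 (Polynomial.C (-1)) g
  rw [hμ.2.2, hv.v_neg_one, zero_add] at h
  rwa [map_neg, map_one, neg_one_mul] at h

/-- ultrametric equality -/
lemma ExtVal.add_eq_left (hv : IsVal v) (hμ : ExtVal v μ) {a b : Polynomial K}
    (h : μ a < μ b) : μ (a + b) = μ a := by
  have h1 : min (μ a) (μ b) ≤ μ (a + b) := hμ.2.1 a b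
  rw [min_eq_left h.le] at h1
  refine le_antisymm ?_ h1
  by_contra hlt
  push_neg at hlt
  have h2 : min (μ (a + b)) (μ (-b)) ≤ μ a := by
    have h3 := hμ.2.1 (a + b) (-b)
    rwa [add_neg_cancel_right] at h3
  rw [hμ.neg' hv] at h2
  exact absurd (lt_min hlt h) h2.not_gt

lemma ExtVal.inf_le_sum (hv : IsVal v) (hμ : ExtVal v μ) (g : ℕ → Polynomial K) :
    ∀ N, (range N).inf (fun s => μ (g s)) ≤ μ (∑ s ∈ range N, g s) := by
  intro N
  induction N with
  | zero => rw [sum_range_zero, hμ.zero' hv]; exact le_top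
  | succ n ih =>
    rw [sum_range_succ]
    refine le_trans (le_min ?_ ?_) (hμ.2.1 _ _)
    · rw [range_add_one, inf_insert]
      exact le_trans inf_le_right ih
    · exact Finset.inf_le (self_mem_range_succ _)

lemma ExtVal.mul_C (hv : IsVal v) (hμ : ExtVal v μ) (g : Polynomial K) (c : K) :
    μ (g * Polynomial.C c) = μ g + v c := by
  rw [hμ.1, hμ.2.2]

lemma inf_add_const (c : WithTop Λ) (G : ℕ → WithTop Λ) (N : ℕ) :
    (range N).inf (fun s => c + G s) = c + (range N).inf G := by
  induction N with
  | zero => simp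
  | succ n ih =>
    rw [range_add_one, inf_insert, inf_insert, ih]
    exact min_add_add_left c (G n) _

lemma inf_range_succ' (F : ℕ → WithTop Λ) (N : ℕ) :
    (range (N+1)).inf F = F 0 ⊓ (range N).inf (fun s => F (s+1)) := by
  induction N with
  | zero => simp
  | succ n ih =>
    rw [range_add_one, inf_insert, ih, range_add_one, inf_insert, inf_left_comm]

lemma exists_expansion (φ : Polynomial K) (hm : φ.Monic) (hd : 1 ≤ φ.natDegree)
    (f : Polynomial K) :
    ∃ (N : ℕ) (a : ℕ → Polynomial K), (∀ s, (a s).degree < φ.degree) ∧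
      f = ∑ s ∈ range (N+1), a s * φ ^ s := by
  have hφ0 : φ ≠ 0 := hm.ne_zero
  have hbot : (⊥ : WithBot ℕ) < φ.degree := by
    rw [bot_lt_iff_ne_bot, ne_eq, degree_eq_bot]
    exact hφ0
  have hdeg : 0 < φ.degree := by
    rw [← natDegree_pos_iff_degree_pos]
    exact hd
  suffices H : ∀ (n : ℕ) (f : Polynomial K), f.natDegree = n →
      ∃ (N : ℕ) (a : ℕ → Polynomial K), (∀ s, (a s).degree < φ.degree) ∧
        f = ∑ s ∈ range (N+1), a s * φ ^ s from H _ f rfl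
  intro n
  induction n using Nat.strong_induction_on with
  | _ n ih =>
  intro f hn
  by_cases hlt : f.degree < φ.degree
  · refine ⟨0, fun s => if s = 0 then f else 0, fun s => ?_, by simp⟩
    by_cases hs : s = 0
    · simpa [hs] using hlt
    · simpa [hs, degree_zero] using hbot
  · have hf0 : f ≠ 0 := by
      intro h
      rw [h, degree_zero] at hlt
      exact hlt hbot
    have hq : (f /ₘ φ).degree < f.degree := degree_divByMonic_lt f φ hf0 hdeg
    have hq0 : f /ₘ φ ≠ 0 := by
      intro h
      rw [Polynomial.divByMonic_eq_zero_iff hm] at h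
      exact hlt h
    have hqn : (f /ₘ φ).natDegree < n := by
      rw [← hn]
      exact natDegree_lt_natDegree hq0 hq
    obtain ⟨N, a, ha, hexp⟩ := ih (f /ₘ φ).natDegree hqn (f /ₘ φ) rfl
    refine ⟨N + 1, fun s => Nat.rec (f %ₘ φ) (fun t _ => a t) s, fun s => ?_, ?_⟩
    · cases s with
      | zero => exact degree_modByMonic_lt f hm
      | succ t => exact ha t
    · rw [Finset.sum_range_succ']
      have : ∑ s ∈ range (N+1),
          (fun s => Nat.rec (motive := fun _ => Polynomial K) (f %ₘ φ) (fun t _ => a t) s) (s+1)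
            * φ ^ (s+1) = φ * ∑ s ∈ range (N+1), a s * φ ^ s := by
        rw [mul_sum]
        exact Finset.sum_congr rfl fun s _ => by ring
      rw [this, ← hexp]
      simp only [pow_zero, mul_one]
      rw [add_comm]
      exact (modByMonic_add_div f φ).symm

/-- powers don't hit top -/
lemma ExtVal.pow_ne_top (hv : IsVal v) (hμ : ExtVal v μ) {φ : Polynomial K}
    (h : μ φ ≠ ⊤) (s : ℕ) : μ (φ ^ s) ≠ ⊤ := by
  induction s with
  | zero => rw [pow_zero, hμ.one' hv]; exact WithTop.zero_ne_top
  | succ t ih =>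
    rw [pow_succ, hμ.1]
    exact WithTop.add_ne_top.2 ⟨ih, h⟩

lemma pow_val_lt (hv : IsVal v) (hμ : ExtVal v μ) (hτ : ExtVal v τ)
    (hle : ∀ g, μ g ≤ τ g) {φ : Polynomial K} (hφ : μ φ < τ φ) (s : ℕ) :
    μ (φ ^ (s+1)) < τ (φ ^ (s+1)) := by
  induction s with
  | zero => simpa [pow_one] using hφ
  | succ t ih =>
    rw [pow_succ, hμ.1, hτ.1]
    calc μ (φ ^ (t+1)) + μ φ < μ (φ ^ (t+1)) + τ φ :=
          WithTop.add_lt_add_left (hμ.pow_ne_top hv (ne_top_of_lt hφ) _) hφ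
      _ ≤ τ (φ ^ (t+1)) + τ φ := add_le_add_left (hle _) _

end Aux

section Core

variable {v : K → WithTop Λ} {μ μ' ν τ : Polynomial K → WithTop Λ}

/-- Expansion formula: if `φ` has minimal degree among polynomials where `μ < ν`,
then `μ` of a φ-expansion is the min of the values of the terms. -/
lemma exp_val (hv : IsVal v) (hμ : ExtVal v μ) (hν : ExtVal v ν)
    (hle : ∀ g, μ g ≤ ν g) {φ : Polynomial K} (hφ : μ φ < ν φ)
    (hmin : ∀ h : Polynomial K, h.degree < φ.degree → μ h = ν h)
    (N : ℕ) (a : ℕ → Polynomial K) (ha : ∀ s, (a s).degree < φ.degree) :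
    μ (∑ s ∈ range (N+1), a s * φ ^ s) = (range (N+1)).inf fun s => μ (a s * φ ^ s) := by
  induction N generalizing a with
  | zero => simp
  | succ n ih =>
    set h : Polynomial K := ∑ s ∈ range (n+1), a (s+1) * φ ^ s with hh
    have hsum : ∑ s ∈ range (n+2), a s * φ ^ s = a 0 * φ ^ 0 + φ * h := by
      rw [Finset.sum_range_succ' (fun s => a s * φ ^ s) (n+1)]
      rw [hh, mul_sum, add_comm]
      congr 1
      exact Finset.sum_congr rfl fun s _ => by ring
    have hih : μ h = (range (n+1)).inf fun s => μ (a (s+1) * φ ^ s) :=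
      ih (fun s => a (s+1)) (fun s => ha (s+1))
    have hR : μ (φ * h) = (range (n+1)).inf fun s => μ (a (s+1) * φ ^ (s+1)) := by
      rw [hμ.1, hih, ← inf_add_const]
      exact Finset.inf_congr rfl fun s _ => by rw [← hμ.1]; congr 1; ring
    have hRν : ν (φ * h) = ν φ + ν h := hν.1 φ h
    rw [hsum, inf_range_succ' (fun s => μ (a s * φ ^ s)) (n+1), ← hR]
    -- goal : μ (a 0 * φ^0 + φ * h) = μ (a 0 * φ^0) ⊓ μ (φ * h)
    rcases lt_trichotomy (μ (a 0 * φ ^ 0)) (μ (φ * h)) with hc | hc | hc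
    · rw [hμ.add_eq_left hv hc, min_eq_left hc.le]
    · rw [← hc, min_self]
      refine le_antisymm ?_ (by have := hμ.2.1 (a 0 * φ ^ 0) (φ * h); rwa [← hc, min_self] at this)
      by_contra hgt
      push_neg at hgt
      rcases eq_or_ne (μ (a 0 * φ ^ 0)) ⊤ with htop | htop
      · rw [htop] at hgt
        exact absurd hgt not_top_lt
      · have hνX : ν (a 0 * φ ^ 0) = μ (a 0 * φ ^ 0) := by
          have hX : a 0 * φ ^ 0 = a 0 := by rw [pow_zero, mul_one]
          rw [hX]
          exact (hmin _ (ha 0)).symm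
        have hmh : μ (φ * h) ≠ ⊤ := by rw [← hc]; exact htop
        rw [hμ.1] at hmh
        have hRν' : μ (φ * h) < ν (φ * h) := by
          rw [hRν, hμ.1]
          calc μ φ + μ h < ν φ + μ h :=
                WithTop.add_lt_add_right (WithTop.add_ne_top.1 hmh).2 hφ
            _ ≤ ν φ + ν h := add_le_add_right (hle h) _
        have hνlt : ν (a 0 * φ ^ 0) < ν (φ * h) := by rw [hνX, hc]; exact hRν'
        have := hν.add_eq_left hv hνlt
        rw [hνX] at this
        exact absurd (lt_of_lt_of_le hgt (le_trans (hle _) this.le)) (lt_irrefl _)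
    · rw [add_comm, hμ.add_eq_left hv hc, min_eq_right hc.le]

/-- D1: if the criterion holds then the bigger valuation agrees at `f`. -/
lemma key_of_crit (hv : IsVal v) (hμ : ExtVal v μ) (hτ : ExtVal v τ)
    (hle : ∀ g, μ g ≤ τ g) {φ : Polynomial K} (hφ : μ φ < τ φ)
    (hmin : ∀ h : Polynomial K, h.degree < φ.degree → μ h = τ h)
    (N : ℕ) (a : ℕ → Polynomial K) (ha : ∀ s, (a s).degree < φ.degree)
    (hcrit : μ (a 0) ≤ (range N).inf fun s => μ (a (s+1) * φ ^ (s+1))) :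
    τ (∑ s ∈ range (N+1), a s * φ ^ s) = μ (∑ s ∈ range (N+1), a s * φ ^ s) := by
  set f : Polynomial K := ∑ s ∈ range (N+1), a s * φ ^ s with hf
  have hterm0 : μ (a 0 * φ ^ 0) = μ (a 0) := by rw [pow_zero, mul_one]
  have hlow : μ (a 0) ≤ μ f := by
    have h1 := hμ.inf_le_sum hv (fun s => a s * φ ^ s) (N+1)
    rw [inf_range_succ' (fun s => μ (a s * φ ^ s)) N, hterm0] at h1
    exact le_trans (le_min le_rfl hcrit) h1
  rcases eq_or_ne (μ (a 0)) ⊤ with htop | htop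
  · have hμf : μ f = ⊤ := top_le_iff.1 (htop ▸ hlow)
    rw [hμf]
    exact top_le_iff.1 (hμf ▸ hle f)
  · have hτ0 : τ (a 0) = μ (a 0) := (hmin _ (ha 0)).symm
    have hsplit : f = (∑ s ∈ range N, a (s+1) * φ ^ (s+1)) + a 0 := by
      rw [hf, Finset.sum_range_succ' (fun s => a s * φ ^ s) N, pow_zero, mul_one]
    have hτR : μ (a 0) < τ (∑ s ∈ range N, a (s+1) * φ ^ (s+1)) := by
      refine lt_of_lt_of_le ?_ (hτ.inf_le_sum hv (fun s => a (s+1) * φ ^ (s+1)) N)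
      rw [Finset.lt_inf_iff (lt_top_iff_ne_top.2 htop)]
      intro s hs
      rcases eq_or_ne (μ (a (s+1))) ⊤ with ht | ht
      · have : τ (a (s+1)) = ⊤ := by rw [← hmin _ (ha (s+1))]; exact ht
        rw [hτ.1, this, top_add]
        exact lt_top_iff_ne_top.2 htop
      · have h2 : μ (a (s+1) * φ ^ (s+1)) < τ (a (s+1) * φ ^ (s+1)) := by
          rw [hμ.1, hτ.1, ← hmin _ (ha (s+1))]
          exact WithTop.add_lt_add_left ht (pow_val_lt hv hμ hτ hle hφ s)
        calc μ (a 0) ≤ (range N).inf (fun s => μ (a (s+1) * φ ^ (s+1))) := hcrit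
          _ ≤ μ (a (s+1) * φ ^ (s+1)) := Finset.inf_le hs
          _ < τ (a (s+1) * φ ^ (s+1)) := h2
    have hτf : τ f = μ (a 0) := by
      rw [hsplit, add_comm, hτ.add_eq_left hv (hτ0 ▸ hτR : τ (a 0) < _)]
      exact hτ0
    have hμf : μ f = μ (a 0) := le_antisymm (hτf ▸ hle f) hlow
    rw [hτf, hμf]

/-- D2: if the criterion fails then the bigger valuation is strictly bigger at `f`. -/
lemma crit_of_key (hv : IsVal v) (hμ : ExtVal v μ) (hτ : ExtVal v τ)
    (hle : ∀ g, μ g ≤ τ g) {φ : Polynomial K} (hφ : μ φ < τ φ)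
    (hmin : ∀ h : Polynomial K, h.degree < φ.degree → μ h = τ h)
    (N : ℕ) (a : ℕ → Polynomial K) (ha : ∀ s, (a s).degree < φ.degree)
    (hM : ((range N).inf fun s => μ (a (s+1) * φ ^ (s+1))) < μ (a 0)) :
    μ (∑ s ∈ range (N+1), a s * φ ^ s) < τ (∑ s ∈ range (N+1), a s * φ ^ s) := by
  set M := (range N).inf fun s => μ (a (s+1) * φ ^ (s+1)) with hMdef
  have hMne : M ≠ ⊤ := ne_top_of_lt hM
  have hμf : μ (∑ s ∈ range (N+1), a s * φ ^ s) = M := by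
    rw [exp_val hv hμ hτ hle hφ hmin N a ha,
      inf_range_succ' (fun s => μ (a s * φ ^ s)) N]
    have : μ (a 0 * φ ^ 0) = μ (a 0) := by rw [pow_zero, mul_one]
    rw [this, ← hMdef, min_eq_right hM.le]
  rw [hμf]
  refine lt_of_lt_of_le ?_ (hτ.inf_le_sum hv (fun s => a s * φ ^ s) (N+1))
  rw [inf_range_succ' (fun s => τ (a s * φ ^ s)) N, lt_inf_iff]
  constructor
  · have h0 : τ (a 0 * φ ^ 0) = μ (a 0) := by rw [pow_zero, mul_one, ← hmin _ (ha 0)]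
    rw [h0]
    exact hM
  · rw [Finset.lt_inf_iff (lt_top_iff_ne_top.2 hMne)]
    intro s hs
    rcases eq_or_ne (μ (a (s+1))) ⊤ with ht | ht
    · have h1 : τ (a (s+1)) = ⊤ := by rw [← hmin _ (ha (s+1))]; exact ht
      rw [hτ.1, h1, top_add]
      exact lt_top_iff_ne_top.2 hMne
    · have h2 : μ (a (s+1) * φ ^ (s+1)) < τ (a (s+1) * φ ^ (s+1)) := by
        rw [hμ.1, hτ.1, ← hmin _ (ha (s+1))]
        exact WithTop.add_lt_add_left ht (pow_val_lt hv hμ hτ hle hφ s)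
      exact lt_of_le_of_lt (Finset.inf_le hs) h2

end Core

section Final

variable {v : K → WithTop Λ} {μ μ' ν : Polynomial K → WithTop Λ}

/-- C: if the minimal-degree witness `φ` for `μ < ν` has `μ φ = μ' φ` for an
intermediate valuation `μ'`, then `μ = μ'`. -/
lemma eq_of_phi_eq (hv : IsVal v) (hμ : ExtVal v μ) (hμ' : ExtVal v μ') (hν : ExtVal v ν)
    (h1 : ∀ g, μ g ≤ μ' g) (h2 : ∀ g, μ' g ≤ ν g)
    {φ : Polynomial K} (hm : φ.Monic) (hd : 1 ≤ φ.natDegree) (hφ : μ φ < ν φ)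
    (hmin : ∀ h : Polynomial K, h.degree < φ.degree → μ h = ν h)
    (heq : μ φ = μ' φ) : μ = μ' := by
  have hmin2 : ∀ h : Polynomial K, h.degree < φ.degree → μ' h = ν h := fun h hd' =>
    le_antisymm (h2 h) ((hmin h hd').ge.trans (h1 h))
  have hφ' : μ' φ < ν φ := heq ▸ hφ
  have hle : ∀ g, μ g ≤ ν g := fun g => (h1 g).trans (h2 g)
  have hpow : ∀ s : ℕ, μ' (φ ^ s) = μ (φ ^ s) := by
    intro s
    induction s with
    | zero => rw [pow_zero, hμ.one' hv, hμ'.one' hv]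
    | succ t ih => rw [pow_succ, hμ.1, hμ'.1, ih, heq]
  funext g
  obtain ⟨N, a, ha, hg⟩ := exists_expansion φ hm hd g
  rw [hg, exp_val hv hμ hν hle hφ hmin N a ha, exp_val hv hμ' hν h2 hφ' hmin2 N a ha]
  refine Finset.inf_congr rfl fun s _ => ?_
  rw [hμ.1, hμ'.1, hpow s, hmin _ (ha s), hmin2 _ (ha s)]

/-- existence of a monic minimal-degree witness for `μ < ν`. -/
lemma exists_phi (hv : IsVal v) (hμ : ExtVal v μ) (hν : ExtVal v ν)
    (hle : ∀ g, μ g ≤ ν g) (hex : ∃ g, μ g < ν g) :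
    ∃ φ : Polynomial K, φ.Monic ∧ μ φ < ν φ ∧
      ∀ h : Polynomial K, h.degree < φ.degree → μ h = ν h := by
  classical
  have hmonic : ∀ g : Polynomial K, μ g < ν g →
      (g * Polynomial.C (g.leadingCoeff)⁻¹).Monic ∧
        μ (g * Polynomial.C (g.leadingCoeff)⁻¹) < ν (g * Polynomial.C (g.leadingCoeff)⁻¹) := by
    intro g hg
    have hg0 : g ≠ 0 := by
      intro h
      rw [h, hμ.zero' hv, hν.zero' hv] at hg
      exact lt_irrefl _ hg
    have hc : (g.leadingCoeff)⁻¹ ≠ 0 := inv_ne_zero (leadingCoeff_ne_zero.2 hg0)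
    refine ⟨monic_mul_leadingCoeff_inv hg0, ?_⟩
    rw [hμ.mul_C hv, hν.mul_C hv]
    exact WithTop.add_lt_add_right (hv.v_ne_top hc) hg
  have hP : ∃ n : ℕ, ∃ g : Polynomial K, g.Monic ∧ g.natDegree = n ∧ μ g < ν g := by
    obtain ⟨g, hg⟩ := hex
    obtain ⟨hm, hlt⟩ := hmonic g hg
    exact ⟨_, _, hm, rfl, hlt⟩
  obtain ⟨φ, hm, hdeg, hφ⟩ := Nat.find_spec hP
  refine ⟨φ, hm, hφ, fun h hd' => ?_⟩
  rcases eq_or_ne h 0 with rfl | hh0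
  · rw [hμ.zero' hv, hν.zero' hv]
  · by_contra hne
    have hlt : μ h < ν h := lt_of_le_of_ne (hle h) hne
    obtain ⟨hm', hlt'⟩ := hmonic h hlt
    have hc : (h.leadingCoeff)⁻¹ ≠ 0 := inv_ne_zero (leadingCoeff_ne_zero.2 hh0)
    have hdlt : (h * Polynomial.C (h.leadingCoeff)⁻¹).natDegree < Nat.find hP := by
      rw [natDegree_mul_C hc, ← hdeg]
      exact natDegree_lt_natDegree hh0 hd'
    exact Nat.find_min hP hdlt ⟨_, hm', rfl, hlt'⟩

/-- Propagation: if `μ ≤ μ' ≤ ν` with `μ ≠ μ'` and `μ f = μ' f`, then `ν f = μ f`. -/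
lemma propagate (hv : IsVal v) (hμ : ExtVal v μ) (hμ' : ExtVal v μ') (hν : ExtVal v ν)
    (h1 : ∀ g, μ g ≤ μ' g) (h2 : ∀ g, μ' g ≤ ν g) (hne : μ ≠ μ')
    (f : Polynomial K) (hf : μ f = μ' f) : ν f = μ f := by
  have hle : ∀ g, μ g ≤ ν g := fun g => (h1 g).trans (h2 g)
  have hex : ∃ g, μ g < ν g := by
    by_contra h
    push_neg at h
    apply hne
    funext g
    exact le_antisymm (h1 g) ((h2 g).trans (h g))
  obtain ⟨φ, hm, hφ, hmin⟩ := exists_phi hv hμ hν hle hex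
  have hd : 1 ≤ φ.natDegree := by
    by_contra h
    push_neg at h
    have hφ1 : φ = 1 := hm.natDegree_eq_zero.1 (Nat.lt_one_iff.1 h)
    rw [hφ1, hμ.one' hv, hν.one' hv] at hφ
    exact lt_irrefl _ hφ
  have hmin1 : ∀ h : Polynomial K, h.degree < φ.degree → μ h = μ' h := fun h hd' =>
    le_antisymm (h1 h) ((hmin h hd').symm ▸ h2 h)
  have hφ1 : μ φ < μ' φ := by
    rcases lt_or_eq_of_le (h1 φ) with h | h
    · exact h
    · exact absurd (eq_of_phi_eq hv hμ hμ' hν h1 h2 hm hd hφ hmin h) hne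
  obtain ⟨N, a, ha, hfe⟩ := exists_expansion φ hm hd f
  have hcrit : μ (a 0) ≤ (range N).inf fun s => μ (a (s+1) * φ ^ (s+1)) := by
    by_contra h
    push_neg at h
    have hlt := crit_of_key hv hμ hμ' h1 hφ1 hmin1 N a ha h
    rw [← hfe] at hlt
    exact absurd hf (ne_of_lt hlt)
  have hkey := key_of_crit hv hμ hν hle hφ hmin N a ha hcrit
  rw [← hfe] at hkey
  exact hkey

end Final

/-- if `f` is not 𝒜-stable then `ρ_i(f) < ρ_j(f)` for all `i < j`. -/
theorem unstable_strict_increase (v : K → WithTop Λ)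
    {A : Type*} [LinearOrder A] (ρ : A → Polynomial K → WithTop Λ)
    (hv : IsVal v) (hval : ∀ i, ExtVal v (ρ i))
    (hmono : ∀ i j : A, i ≤ j → ∀ f, ρ i f ≤ ρ j f)
    (hstrict : ∀ i j : A, i < j → ρ i ≠ ρ j)
    (f : Polynomial K) (hf : ¬ AStable ρ f) :
    ∀ i j : A, i < j → ρ i f < ρ j f := by
  intro i j hij
  rcases lt_or_eq_of_le (hmono i j hij.le f) with h | h
  · exact h
  · exfalso
    apply hf
    refine ⟨j, fun k hk => ?_⟩
    rcases eq_or_lt_of_le hk with rfl | hjk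
    · rfl
    · have hp := propagate hv (hval i) (hval j) (hval k)
        (fun g => hmono i j hij.le g) (fun g => hmono j k hjk.le g)
        (hstrict i j hij) f h
      exact hp.trans h
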